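/- A finitely generated T_{1/2} space is connected if and only if its specialization graph is connected (as an undirected graph), and it is maximal connected if and only if its specialization graph is a tree. Consequently, finitely generated maximal connected spaces correspond exactly to tree graphs with a fixed bipartition into isolated and closed points. -/

import Mathlib

/-- A space is `T_{1/2}` if every singleton is open or closed. -/
def THalf (Y : Type*) [TopologicalSpace Y] : Prop :=
  ∀ y : Y, IsOpen ({y} : Set Y) ∨ IsClosed ({y} : Set Y)

/-- A topology is maximal connected if it is connected and no strictly finer topology
is connected. -/
def MaximalConnected {X : Type*} (t : TopologicalSpace X) : Prop :=
  @ConnectedSpace X t ∧ ∀ s : TopologicalSpace X, s < t → ¬ @ConnectedSpace X s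

/-- The (undirected) specialization graph of a space: an edge between distinct points
`x` and `y` whenever one lies in the closure of the other, i.e. whenever they are
strictly comparable in the specialization order. -/
def specializationGraph (Y : Type*) [TopologicalSpace Y] : SimpleGraph Y :=
  SimpleGraph.fromRel (fun x y => x ∈ closure ({y} : Set Y))

open Set TopologicalSpace SimpleGraph

section Aux

variable {X : Type*}

lemma aux_mem_closure_singleton [TopologicalSpace X] {x y : X} :
    x ∈ closure ({y} : Set X) ↔ ∀ O : Set X, IsOpen O → x ∈ O → y ∈ O := by
  rw [mem_closure_iff]
  constructor
  · intro hh O hO hx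
    obtain ⟨z, hz1, hz2⟩ := hh O hO hx
    rwa [Set.mem_singleton_iff.mp hz2] at hz1
  · intro hh O hO hx
    exact ⟨y, hh O hO hx, rfl⟩

/-- The minimal open neighbourhood candidate. -/
def auxUx [TopologicalSpace X] (x : X) : Set X := ⋂₀ {U : Set X | IsOpen U ∧ x ∈ U}

lemma aux_isOpen_Ux [TopologicalSpace X] [AlexandrovDiscrete X] (x : X) :
    IsOpen (auxUx x) :=
  isOpen_sInter fun _ h => h.1

lemma aux_mem_Ux_self [TopologicalSpace X] (x : X) : x ∈ auxUx x :=
  Set.mem_sInter.mpr fun _ hU => hU.2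

lemma aux_mem_Ux_iff [TopologicalSpace X] (x y : X) :
    y ∈ auxUx x ↔ x ∈ closure ({y} : Set X) := by
  rw [aux_mem_closure_singleton]
  constructor
  · intro hy O hO hx
    exact Set.mem_sInter.mp hy O ⟨hO, hx⟩
  · intro hh
    exact Set.mem_sInter.mpr fun U hU => hh U hU.1 hU.2

lemma aux_Ux_subset [TopologicalSpace X] {x : X} {U : Set X} (hU : IsOpen U) (hx : x ∈ U) :
    auxUx x ⊆ U :=
  Set.sInter_subset_of_mem ⟨hU, hx⟩

lemma aux_isOpen_iff [TopologicalSpace X] [AlexandrovDiscrete X] {U : Set X} :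
    IsOpen U ↔ ∀ x ∈ U, auxUx x ⊆ U := by
  constructor
  · intro hU x hx
    exact aux_Ux_subset hU hx
  · intro hsub
    have : U = ⋃ x ∈ U, auxUx x := by
      apply subset_antisymm
      · intro x hx
        exact Set.mem_biUnion hx (aux_mem_Ux_self x)
      · intro z hz
        obtain ⟨x, hx, hzx⟩ := Set.mem_iUnion₂.mp hz
        exact hsub x hx hzx
    rw [this]
    exact isOpen_biUnion fun x _ => aux_isOpen_Ux x

/-- Structure of a strict specialization in a `T_{1/2}` space. -/
lemma aux_edge_struct [TopologicalSpace X] (h : THalf X) {x y : X}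
    (hxy : x ∈ closure ({y} : Set X)) (hne : x ≠ y) :
    ¬ IsOpen ({x} : Set X) ∧ IsClosed ({x} : Set X) ∧
      IsOpen ({y} : Set X) ∧ ¬ IsClosed ({y} : Set X) := by
  have hxno : ¬ IsOpen ({x} : Set X) := by
    intro hop
    exact hne (aux_mem_closure_singleton.mp hxy {x} hop rfl).symm
  have hyncl : ¬ IsClosed ({y} : Set X) := by
    intro hcl
    rw [hcl.closure_eq] at hxy
    exact hne hxy
  refine ⟨hxno, ?_, ?_, hyncl⟩
  · rcases h x with h1 | h1
    · exact absurd h1 hxno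
    · exact h1
  · rcases h y with h1 | h1
    · exact h1
    · exact absurd h1 hyncl

/-- If a graph whose edges are specializations is connected, the space is connected. -/
lemma aux_conn_of_graph [TopologicalSpace X] (G : SimpleGraph X) (hG : G.Connected)
    (hE : ∀ x y : X, G.Adj x y →
      x ∈ closure ({y} : Set X) ∨ y ∈ closure ({x} : Set X)) :
    ConnectedSpace X := by
  obtain ⟨x₀⟩ := hG.nonempty
  have hstep : ∀ u v : X, u ∈ closure ({v} : Set X) →
      connectedComponent u = connectedComponent v := by
    intro u v huv
    have hpc : IsPreconnected (closure ({v} : Set X)) :=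
      isPreconnected_singleton.closure
    have hsub : closure ({v} : Set X) ⊆ connectedComponent v :=
      hpc.subset_connectedComponent (subset_closure rfl)
    exact (connectedComponent_eq (hsub huv)).symm
  have hwalk : ∀ {u v : X}, G.Walk u v → connectedComponent u = connectedComponent v := by
    intro u v w
    induction w with
    | nil => rfl
    | cons hadj _ ih =>
      rename_i u' v' w' _
      rcases hE u' v' hadj with h1 | h1
      · exact (hstep _ _ h1).trans ih
      · exact ((hstep _ _ h1).symm).trans ih
  have huniv : connectedComponent x₀ = (Set.univ : Set X) := by
    apply Set.eq_univ_of_forall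
    intro y
    obtain ⟨w⟩ := hG.preconnected x₀ y
    rw [hwalk w]
    exact mem_connectedComponent
  exact connectedSpace_iff_univ.mpr (huniv ▸ isConnected_connectedComponent)

/-- In an Alexandrov space, connectivity implies the specialization graph is connected. -/
lemma aux_graph_conn [TopologicalSpace X] [AlexandrovDiscrete X]
    (hc : ConnectedSpace X) : (specializationGraph X).Connected := by
  obtain ⟨x₀⟩ := hc.toNonempty
  set G := specializationGraph X with hGdef
  have hstep : ∀ y z : X, z ∈ auxUx y → y = z ∨ G.Adj y z := by
    intro y z hz
    by_cases hyz : y = z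
    · exact Or.inl hyz
    · exact Or.inr ((SimpleGraph.fromRel_adj _ y z).mpr
        ⟨hyz, Or.inl ((aux_mem_Ux_iff y z).mp hz)⟩)
  set C : Set X := {y | G.Reachable x₀ y} with hCdef
  have hCopen : IsOpen C := by
    rw [aux_isOpen_iff]
    intro y hy z hz
    rcases hstep y z hz with rfl | hadj
    · exact hy
    · exact hy.trans hadj.reachable
  have hCcopen : IsOpen Cᶜ := by
    rw [aux_isOpen_iff]
    intro y hy z hz
    intro hzC
    rcases hstep y z hz with rfl | hadj
    · exact hy hzC
    · exact hy (hzC.trans hadj.symm.reachable)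
  have hC : C = Set.univ :=
    IsClopen.eq_univ ⟨isOpen_compl_iff.mp hCcopen, hCopen⟩ ⟨x₀, SimpleGraph.Reachable.refl _⟩
  refine (SimpleGraph.connected_iff G).mpr ⟨?_, ⟨x₀⟩⟩
  intro a b
  have ha : a ∈ C := hC ▸ Set.mem_univ a
  have hb : b ∈ C := hC ▸ Set.mem_univ b
  exact (ha : G.Reachable x₀ a).symm.trans hb

/-- Deleting a non-bridge edge preserves reachability. -/
lemma aux_reach_del {V : Type*} (G : SimpleGraph V) (a b : V)
    (hab : (G \ SimpleGraph.fromEdgeSet {s(a, b)}).Reachable a b) :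
    ∀ {x y : V}, G.Reachable x y →
      (G \ SimpleGraph.fromEdgeSet {s(a, b)}).Reachable x y := by
  have key : ∀ {x y : V}, G.Walk x y →
      (G \ SimpleGraph.fromEdgeSet {s(a, b)}).Reachable x y := by
    intro x y w
    induction w with
    | nil => exact SimpleGraph.Reachable.refl _
    | cons hadj _ ih =>
      rename_i u v w' _
      refine SimpleGraph.Reachable.trans ?_ ih
      by_cases he : s(u, v) = s(a, b)
      · rcases Sym2.eq_iff.mp he with ⟨rfl, rfl⟩ | ⟨rfl, rfl⟩
        · exact hab
        · exact hab.symm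
      · refine SimpleGraph.Adj.reachable ?_
        rw [SimpleGraph.sdiff_adj]
        refine ⟨hadj, ?_⟩
        rw [SimpleGraph.fromEdgeSet_adj]
        rintro ⟨hmem, -⟩
        exact he (Set.mem_singleton_iff.mp hmem)
  intro x y hxy
  obtain ⟨w⟩ := hxy
  exact key w

/-- After deleting an edge `ab`, every vertex reaches `a` or `b`. -/
lemma aux_reach_del_or {V : Type*} (G : SimpleGraph V) (a b : V) :
    ∀ {x y : V}, G.Walk x y →
      (G \ SimpleGraph.fromEdgeSet {s(a, b)}).Reachable x y ∨
      ((G \ SimpleGraph.fromEdgeSet {s(a, b)}).Reachable x a ∨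
        (G \ SimpleGraph.fromEdgeSet {s(a, b)}).Reachable x b) := by
  intro x y w
  induction w with
  | nil => exact Or.inl (SimpleGraph.Reachable.refl _)
  | cons hadj _ ih =>
    rename_i u v w' _
    by_cases he : s(u, v) = s(a, b)
    · rcases Sym2.eq_iff.mp he with ⟨rfl, rfl⟩ | ⟨rfl, rfl⟩
      · exact Or.inr (Or.inl (SimpleGraph.Reachable.refl _))
      · exact Or.inr (Or.inr (SimpleGraph.Reachable.refl _))
    · have hadj' : (G \ SimpleGraph.fromEdgeSet {s(a, b)}).Adj u v := by
        rw [SimpleGraph.sdiff_adj]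
        refine ⟨hadj, ?_⟩
        rw [SimpleGraph.fromEdgeSet_adj]
        rintro ⟨hmem, -⟩
        exact he (Set.mem_singleton_iff.mp hmem)
      rcases ih with h1 | h1 | h1
      · exact Or.inl (hadj'.reachable.trans h1)
      · exact Or.inr (Or.inl (hadj'.reachable.trans h1))
      · exact Or.inr (Or.inr (hadj'.reachable.trans h1))

/-- Points in generated-topology closures. -/
lemma aux_closure_gen (S : Set (Set X)) {x y : X}
    (hall : ∀ O ∈ S, x ∈ O → y ∈ O) :
    x ∈ @closure X (generateFrom S) ({y} : Set X) := by
  letI tS : TopologicalSpace X := generateFrom S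
  rw [aux_mem_closure_singleton]
  intro O hO
  have hO' : TopologicalSpace.GenerateOpen S O := hO
  clear hO
  induction hO' with
  | basic u hu => exact hall u hu
  | univ => exact fun _ => trivial
  | inter u v _ _ ihu ihv => exact fun hx => ⟨ihu hx.1, ihv hx.2⟩
  | sUnion s _ ih =>
    rintro ⟨u, hu, hxu⟩
    exact Set.mem_sUnion.mpr ⟨u, hu, ih u hu hxu⟩

end Aux

/-- a finitely generated (Alexandrov) `T_{1/2}` space is connected iff its
specialization graph is connected, and maximal connected iff its specialization graph is
a tree.  (Hence finitely generated maximal connected spaces correspond exactly to tree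
graphs with a fixed bipartition into isolated and closed points.) -/
theorem stmt_19 {X : Type*} [t : TopologicalSpace X] [AlexandrovDiscrete X]
    (h : THalf X) :
    (ConnectedSpace X ↔ (specializationGraph X).Connected) ∧
    (MaximalConnected t ↔ (specializationGraph X).IsTree) := by
  classical
  set G := specializationGraph X with hGdef
  have hadj_iff : ∀ x y : X, G.Adj x y ↔ x ≠ y ∧
      (x ∈ closure ({y} : Set X) ∨ y ∈ closure ({x} : Set X)) :=
    fun x y => SimpleGraph.fromRel_adj _ x y
  have part1 : ConnectedSpace X ↔ G.Connected := by
    constructor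
    · exact aux_graph_conn
    · intro hg
      exact aux_conn_of_graph G hg (fun x y ha => ((hadj_iff x y).mp ha).2)
  refine ⟨part1, ?_, ?_⟩
  · -- maximal connected → tree
    intro hm
    have hconn : G.Connected := part1.mp hm.1
    refine ⟨hconn, ?_⟩
    rw [SimpleGraph.isAcyclic_iff_forall_adj_isBridge]
    intro v w hvw
    by_contra hbr
    have hreach : (G \ SimpleGraph.fromEdgeSet {s(v, w)}).Reachable v w := by
      rw [SimpleGraph.isBridge_iff] at hbr
      by_contra hr
      exact hbr hr
    -- key claim, valid for either orientation of the specialization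
    have key : ∀ a b : X, G.Adj a b → a ∈ closure ({b} : Set X) →
        (G \ SimpleGraph.fromEdgeSet {s(a, b)}).Reachable a b → False := by
      intro a b hab hacl hr
      have hne : a ≠ b := hab.ne
      obtain ⟨hano, hacl', hbo, hbnc⟩ := aux_edge_struct h hacl hne
      set U : Set X := auxUx a \ {b} with hUdef
      have hbUa : b ∈ auxUx a := (aux_mem_Ux_iff a b).mpr hacl
      have hUnotopen : ¬ IsOpen U := by
        intro hop
        have haU : a ∈ U := ⟨aux_mem_Ux_self a, hne⟩
        have : auxUx a ⊆ U := aux_Ux_subset hop haU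
        exact (this hbUa).2 rfl
      set S : Set (Set X) := insert U {V : Set X | IsOpen V} with hSdef
      have ht'le : generateFrom S ≤ t := by
        conv_rhs => rw [← generateFrom_setOf_isOpen t]
        exact generateFrom_anti (Set.subset_insert _ _)
      have hUopen' : @IsOpen X (generateFrom S) U :=
        TopologicalSpace.GenerateOpen.basic U (Set.mem_insert _ _)
      have ht'lt : generateFrom S < t := by
        refine lt_of_le_of_ne ht'le ?_
        intro heq
        rw [heq] at hUopen'
        exact hUnotopen hUopen'
      -- the deleted graph
      set G' : SimpleGraph X := G \ SimpleGraph.fromEdgeSet {s(a, b)} with hG'def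
      have hG'conn : G'.Connected := by
        refine (SimpleGraph.connected_iff G').mpr ⟨?_, hconn.nonempty⟩
        intro x y
        exact aux_reach_del G a b hr (hconn.preconnected x y)
      -- edges of G' are specializations for the generated topology
      have hcore : ∀ x y : X, x ∈ closure ({y} : Set X) → x ≠ y →
          s(x, y) ≠ s(a, b) → ∀ O ∈ S, x ∈ O → y ∈ O := by
        intro x y hxy hxyne hse O hO
        rcases Set.mem_insert_iff.mp hO with rfl | hO
        · -- O = U
          intro hxU
          obtain ⟨hxno, _, _, _⟩ := aux_edge_struct h hxy hxyne
          have hxa : x = a := by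
            by_contra hxa
            have haclx : a ∈ closure ({x} : Set X) := (aux_mem_Ux_iff a x).mp hxU.1
            have := (aux_edge_struct h haclx (fun hh => hxa hh.symm)).2.2.1
            exact hxno this
          subst hxa
          have hyUa : y ∈ auxUx x := (aux_mem_Ux_iff x y).mpr hxy
          have hyb : y ≠ b := by
            intro hyb
            subst hyb
            exact hse rfl
          exact ⟨hyUa, hyb⟩
        · exact fun hx => aux_mem_closure_singleton.mp hxy O hO hx
      have hE' : ∀ x y : X, G'.Adj x y →
          x ∈ @closure X (generateFrom S) ({y} : Set X) ∨
            y ∈ @closure X (generateFrom S) ({x} : Set X) := by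
        intro x y hxy
        rw [hG'def, SimpleGraph.sdiff_adj] at hxy
        obtain ⟨hGxy, hnf⟩ := hxy
        have hse : s(x, y) ≠ s(a, b) := by
          intro hse
          exact hnf ((SimpleGraph.fromEdgeSet_adj _).mpr ⟨hse, hGxy.ne⟩)
        obtain ⟨hxyne, hcl | hcl⟩ := (hadj_iff x y).mp hGxy
        · exact Or.inl (aux_closure_gen S (hcore x y hcl hxyne hse))
        · refine Or.inr (aux_closure_gen S (hcore y x hcl (fun hh => hxyne hh.symm) ?_))
          rw [Sym2.eq_swap]
          exact hse
      exact hm.2 (generateFrom S) ht'lt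
        (@aux_conn_of_graph X (generateFrom S) G' hG'conn hE')
    rcases (hadj_iff v w).mp hvw with ⟨hne, hcl | hcl⟩
    · exact key v w hvw hcl hreach
    · refine key w v hvw.symm hcl ?_
      rw [Sym2.eq_swap]
      exact hreach.symm
  · -- tree → maximal connected
    intro htree
    have hconn : G.Connected := htree.isConnected
    refine ⟨part1.mpr hconn, ?_⟩
    intro s hs hcs
    haveI := hcs
    -- from here on, the ambient topology notation refers to `s`
    obtain ⟨U, hUs, hUt⟩ : ∃ U : Set X, IsOpen U ∧ ¬ @IsOpen X t U := by
      by_contra hc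
      push_neg at hc
      exact hs.not_ge ((@isOpen_implies_isOpen_iff X s t).mp hc)
    have hst : ∀ V : Set X, @IsOpen X t V → IsOpen V := fun V hV => hV.mono hs.le
    -- extract the broken specialization
    rw [@aux_isOpen_iff X t _ U] at hUt
    push_neg at hUt
    obtain ⟨a, haU, hnsub⟩ := hUt
    obtain ⟨b, hbUa, hbU⟩ := Set.not_subset.mp hnsub
    have hacl : a ∈ @closure X t ({b} : Set X) := (@aux_mem_Ux_iff X t a b).mp hbUa
    have hne : a ≠ b := fun hh => hbU (hh ▸ haU)
    obtain ⟨hano, hacl', hbo, hbnc⟩ := @aux_edge_struct X t h a b hacl hne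
    have hab : G.Adj a b := (hadj_iff a b).mpr ⟨hne, Or.inl hacl⟩
    set G' : SimpleGraph X := G \ SimpleGraph.fromEdgeSet {s(a, b)} with hG'def
    have hbridge : ¬ G'.Reachable a b := by
      have := (SimpleGraph.isAcyclic_iff_forall_adj_isBridge.mp htree.IsAcyclic) hab
      rw [SimpleGraph.isBridge_iff] at this
      exact this
    set A : Set X := {x | G'.Reachable x a} with hAdef
    set B : Set X := {x | G'.Reachable x b} with hBdef
    have hdisj : ∀ x : X, x ∈ A → x ∈ B → False := by
      intro x hxA hxB
      exact hbridge ((hxA : G'.Reachable x a).symm.trans hxB)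
    have hcover : ∀ x : X, x ∈ A ∨ x ∈ B := by
      intro x
      obtain ⟨w⟩ := hconn.preconnected x a
      rcases aux_reach_del_or G a b w with h1 | h1 | h1
      · exact Or.inl h1
      · exact Or.inl h1
      · exact Or.inr h1
    have haA : a ∈ A := SimpleGraph.Reachable.refl _
    have hbB : b ∈ B := SimpleGraph.Reachable.refl _
    -- adjacency away from the bridge survives
    have hkeep : ∀ x z : X, G.Adj x z → s(x, z) ≠ s(a, b) → G'.Adj x z := by
      intro x z hxz hse
      rw [hG'def, SimpleGraph.sdiff_adj]
      refine ⟨hxz, ?_⟩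
      intro hf
      exact hse (((SimpleGraph.fromEdgeSet_adj _).mp hf).1)
    have hA_open : IsOpen A := by
      rw [isOpen_iff_forall_mem_open]
      intro x hxA
      by_cases hxa : x = a
      · subst hxa
        refine ⟨@auxUx X t x ∩ U, ?_, ?_, ⟨@aux_mem_Ux_self X t x, haU⟩⟩
        · intro z hz
          by_cases hzx : z = x
          · exact hzx ▸ hxA
          · have hzb : z ≠ b := fun hh => hbU (hh ▸ hz.2)
            have hGxz : G.Adj x z := (hadj_iff x z).mpr
              ⟨fun hh => hzx hh.symm, Or.inl ((@aux_mem_Ux_iff X t x z).mp hz.1)⟩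
            have hse : s(x, z) ≠ s(x, b) := by
              intro hse
              rcases Sym2.eq_iff.mp hse with ⟨_, h2⟩ | ⟨h1, _⟩
              · exact hzb h2
              · exact hne h1
            exact SimpleGraph.Reachable.trans (hkeep x z hGxz hse).symm.reachable hxA
        · exact IsOpen.inter (hst _ (@aux_isOpen_Ux X t _ x)) hUs
      · refine ⟨@auxUx X t x, ?_, hst _ (@aux_isOpen_Ux X t _ x), @aux_mem_Ux_self X t x⟩
        intro z hz
        by_cases hzx : z = x
        · exact hzx ▸ hxA
        · have hxb : x ≠ b := fun hh => hdisj x hxA (hh ▸ hbB)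
          have hGxz : G.Adj x z := (hadj_iff x z).mpr
            ⟨fun hh => hzx hh.symm, Or.inl ((@aux_mem_Ux_iff X t x z).mp hz)⟩
          have hse : s(x, z) ≠ s(a, b) := by
            intro hse
            rcases Sym2.eq_iff.mp hse with ⟨h1, _⟩ | ⟨h1, _⟩
            · exact hxa h1
            · exact hxb h1
          exact SimpleGraph.Reachable.trans (hkeep x z hGxz hse).symm.reachable hxA
    have hB_open : IsOpen B := by
      rw [isOpen_iff_forall_mem_open]
      intro x hxB
      by_cases hxb : x = b
      · subst hxb
        exact ⟨{x}, Set.singleton_subset_iff.mpr hxB, hst _ hbo, rfl⟩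
      · have hxa : x ≠ a := fun hh => hdisj x (hh ▸ haA) hxB
        refine ⟨@auxUx X t x, ?_, hst _ (@aux_isOpen_Ux X t _ x), @aux_mem_Ux_self X t x⟩
        intro z hz
        by_cases hzx : z = x
        · exact hzx ▸ hxB
        · have hGxz : G.Adj x z := (hadj_iff x z).mpr
            ⟨fun hh => hzx hh.symm, Or.inl ((@aux_mem_Ux_iff X t x z).mp hz)⟩
          have hse : s(x, z) ≠ s(a, b) := by
            intro hse
            rcases Sym2.eq_iff.mp hse with ⟨h1, _⟩ | ⟨h1, _⟩
            · exact hxa h1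
            · exact hxb h1
          exact SimpleGraph.Reachable.trans (hkeep x z hGxz hse).symm.reachable hxB
    have hAcB : Aᶜ = B := by
      ext x
      constructor
      · intro hx
        rcases hcover x with h1 | h1
        · exact absurd h1 hx
        · exact h1
      · intro hx h1
        exact hdisj x h1 hx
    have hclopen : IsClopen A :=
      ⟨isOpen_compl_iff.mp (hAcB ▸ hB_open), hA_open⟩
    have huniv : A = Set.univ := hclopen.eq_univ ⟨a, haA⟩
    exact hdisj b (huniv ▸ Set.mem_univ b) hbB
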